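/- Let (V,μ) be a simple, strongly connected, finite weighted directed graph with Perron measure 𝔪. Assume the Ricci curvature satisfies κ(x,y) ≥ K > 0 for all x ≠ y and sup_x 𝒟_x ≤ Λ for some Λ ≥ 1. Then for every 1-Lipschitz function f : V → ℝ and every r > 0, 𝔪({f ≥ 𝔪(f) + r}) ≤ e^{−Kr²/Λ²}. -/

import Mathlib

open Finset

namespace Chung

variable {V : Type*}

/-- There is a directed path of length `n` from `x` to `y` (edges are pairs of
positive weight). -/
def PathLen (μ : V → V → ℝ) (n : ℕ) (x y : V) : Prop :=
  ∃ p : ℕ → V, p 0 = x ∧ p n = y ∧ ∀ i < n, 0 < μ (p i) (p (i + 1))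

/-- The (non-symmetric) graph distance: the minimal length of a directed path. -/
noncomputable def gdist (μ : V → V → ℝ) (x y : V) : ℝ :=
  (sInf {n : ℕ | PathLen μ n x y} : ℕ)

/-- `(V,μ)` is a simple, strongly connected weighted directed graph. -/
def IsGraph (μ : V → V → ℝ) : Prop :=
  (∀ x y, 0 ≤ μ x y) ∧ (∀ x, μ x x = 0) ∧ (∀ x y, ∃ n, PathLen μ n x y)

variable [Fintype V]

/-- The transition probability kernel `P(x,y) = μ_{xy}/μ(x)`. -/
noncomputable def ker (μ : V → V → ℝ) (x y : V) : ℝ := μ x y / ∑ z, μ x z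

/-- `m` is the Perron (stationary probability) measure of the kernel `P`. -/
def IsPerron (μ : V → V → ℝ) (m : V → ℝ) : Prop :=
  (∀ x, 0 < m x) ∧ (∑ x, m x = 1) ∧ ∀ y, m y = ∑ x, m x * ker μ x y

/-- The mean transition probability kernel `𝒫 = (P + ←P)/2`,
where `←P(x,y) = m(y)P(y,x)/m(x)`. -/
noncomputable def meanKer (μ : V → V → ℝ) (m : V → ℝ) (x y : V) : ℝ :=
  (ker μ x y + m y * ker μ y x / m x) / 2

variable [DecidableEq V]

/-- The Chung Laplacian `ℒ = I − 𝒫` as a matrix. -/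
noncomputable def lapMat (μ : V → V → ℝ) (m : V → ℝ) : Matrix V V ℝ :=
  1 - Matrix.of (meanKer μ m)

/-- The Chung Laplacian applied to a function. -/
noncomputable def lap (μ : V → V → ℝ) (m : V → ℝ) (f : V → ℝ) : V → ℝ :=
  (lapMat μ m).mulVec f

/-- The heat semigroup `P_t = e^{−tℒ}` as a matrix. -/
noncomputable def heatMat (μ : V → V → ℝ) (m : V → ℝ) (t : ℝ) : Matrix V V ℝ :=
  NormedSpace.exp ((-t) • lapMat μ m)

/-- `P_t f`. -/
noncomputable def heatSG (μ : V → V → ℝ) (m : V → ℝ) (t : ℝ) (f : V → ℝ) : V → ℝ :=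
  (heatMat μ m t).mulVec f

/-- The heat kernel measure `p_x^t(y) = m(y)·(P_t δ_x)(y)/m(x)`. -/
noncomputable def heatKer (μ : V → V → ℝ) (m : V → ℝ) (t : ℝ) (x y : V) : ℝ :=
  m y * heatSG μ m t (fun z => if z = x then 1 else 0) y / m x

/-- `π` is a coupling of the probability measures `ν₀` and `ν₁`. -/
def IsCoupling (π : V → V → ℝ) (ν₀ ν₁ : V → ℝ) : Prop :=
  (∀ x y, 0 ≤ π x y) ∧ (∀ x, ∑ y, π x y = ν₀ x) ∧ (∀ y, ∑ x, π x y = ν₁ y)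

/-- Wasserstein distance for the (possibly non-symmetric) cost `d`. -/
noncomputable def wass (d : V → V → ℝ) (ν₀ ν₁ : V → ℝ) : ℝ :=
  sInf {r : ℝ | ∃ π : V → V → ℝ, IsCoupling π ν₀ ν₁ ∧ r = ∑ x, ∑ y, d x y * π x y}

/-- Lipschitz constant with respect to the (non-symmetric) distance `d`. -/
noncomputable def lipConst (d : V → V → ℝ) (f : V → ℝ) : ℝ :=
  sSup {r : ℝ | ∃ x y, x ≠ y ∧ r = (f y - f x) / d x y}

/-- The Lin–Lu–Yau type Ricci curvature of the directed graph, via the limit-free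
formula `κ(x,y) = inf {∇_{xy} ℒf : f 1-Lipschitz, ∇_{xy} f = 1}`. -/
noncomputable def ricci (μ : V → V → ℝ) (m : V → ℝ) (x y : V) : ℝ :=
  sInf {r : ℝ | ∃ f : V → ℝ, (∀ a b, f b - f a ≤ gdist μ a b) ∧
    (f y - f x) / gdist μ x y = 1 ∧
    r = (lap μ m f y - lap μ m f x) / gdist μ x y}
section AuxConcentration

variable {V : Type*} [Fintype V] [DecidableEq V]

/-! ### Basic facts about `gdist` -/

lemma gdist_nonneg' (μ : V → V → ℝ) (x y : V) : 0 ≤ gdist μ x y := Nat.cast_nonneg _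

lemma pathLen_zero {μ : V → V → ℝ} {x y : V} (h : PathLen μ 0 x y) : x = y := by
  obtain ⟨p, h0, hn, -⟩ := h
  rw [← h0, hn]

lemma gdist_self' (μ : V → V → ℝ) (x : V) : gdist μ x x = 0 := by
  have h0 : (0 : ℕ) ∈ {n : ℕ | PathLen μ n x x} := ⟨fun _ => x, rfl, rfl, by omega⟩
  simp [gdist, Nat.sInf_eq_zero.2 (Or.inl h0)]

lemma one_le_gdist {μ : V → V → ℝ} (hG : IsGraph μ) {x y : V} (h : x ≠ y) :
    1 ≤ gdist μ x y := by
  have hne : {n : ℕ | PathLen μ n x y}.Nonempty := hG.2.2 x y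
  have hmem := Nat.sInf_mem hne
  have : sInf {n : ℕ | PathLen μ n x y} ≠ 0 := by
    intro h0
    exact h (pathLen_zero (h0 ▸ hmem))
  have h1 : 1 ≤ sInf {n : ℕ | PathLen μ n x y} := Nat.one_le_iff_ne_zero.2 this
  exact_mod_cast Nat.one_le_cast.2 h1

lemma gdist_pos {μ : V → V → ℝ} (hG : IsGraph μ) {x y : V} (h : x ≠ y) :
    0 < gdist μ x y := lt_of_lt_of_le one_pos (one_le_gdist hG h)

/-! ### Kernel facts -/

lemma sum_mu_pos [Nontrivial V] {μ : V → V → ℝ} (hG : IsGraph μ) (x : V) :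
    0 < ∑ z, μ x z := by
  obtain ⟨y, hy⟩ := exists_ne x
  obtain ⟨n, hp⟩ := hG.2.2 x y
  have hn : n ≠ 0 := by
    intro h0
    exact hy (pathLen_zero (h0 ▸ hp)).symm
  obtain ⟨p, h0, hne, hpos⟩ := hp
  have h1 : 0 < μ x (p 1) := by
    have := hpos 0 (Nat.pos_of_ne_zero hn)
    rwa [h0] at this
  exact Finset.sum_pos' (fun z _ => hG.1 x z) ⟨p 1, Finset.mem_univ _, h1⟩

lemma ker_nonneg {μ : V → V → ℝ} (hG : IsGraph μ) (x y : V) : 0 ≤ ker μ x y := by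
  unfold ker
  exact div_nonneg (hG.1 x y) (Finset.sum_nonneg fun z _ => hG.1 x z)

lemma ker_row_sum [Nontrivial V] {μ : V → V → ℝ} (hG : IsGraph μ) (x : V) :
    ∑ z, ker μ x z = 1 := by
  unfold ker
  rw [← Finset.sum_div, div_self (sum_mu_pos hG x).ne']

lemma ker_diag {μ : V → V → ℝ} (hG : IsGraph μ) (x : V) : ker μ x x = 0 := by
  simp [ker, hG.2.1 x]

lemma ker_pos_imp {μ : V → V → ℝ} (hG : IsGraph μ) {x y : V} (h : 0 < ker μ x y) :
    0 < μ x y := by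
  rcases (hG.1 x y).lt_or_eq with h' | h'
  · exact h'
  · exfalso; rw [ker, ← h'] at h; simp at h

lemma meanKer_nonneg {μ : V → V → ℝ} {m : V → ℝ} (hG : IsGraph μ) (hP : IsPerron μ m)
    (x y : V) : 0 ≤ meanKer μ m x y := by
  unfold meanKer
  have h1 := ker_nonneg hG x y
  have h2 := ker_nonneg hG y x
  have h3 := (hP.1 y).le
  have h4 := hP.1 x
  positivity

lemma meanKer_diag {μ : V → V → ℝ} {m : V → ℝ} (hG : IsGraph μ) (x : V) :
    meanKer μ m x x = 0 := by
  simp [meanKer, ker_diag hG]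

lemma meanKer_pos_imp {μ : V → V → ℝ} {m : V → ℝ} (hG : IsGraph μ) (hP : IsPerron μ m)
    {x y : V} (h : 0 < meanKer μ m x y) : 0 < μ x y ∨ 0 < μ y x := by
  by_contra hc
  push_neg at hc
  have h1 : μ x y = 0 := le_antisymm hc.1 (hG.1 x y)
  have h2 : μ y x = 0 := le_antisymm hc.2 (hG.1 y x)
  rw [meanKer, ker, ker, h1, h2] at h
  simp at h

lemma meanKer_pos_ne {μ : V → V → ℝ} {m : V → ℝ} (hG : IsGraph μ)
    {x y : V} (h : 0 < meanKer μ m x y) : x ≠ y := by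
  intro he
  rw [he, meanKer_diag hG] at h
  exact lt_irrefl _ h

lemma meanKer_row [Nontrivial V] {μ : V → V → ℝ} {m : V → ℝ} (hG : IsGraph μ)
    (hP : IsPerron μ m) (x : V) : ∑ z, meanKer μ m x z = 1 := by
  unfold meanKer
  have h1 : ∑ z, m z * ker μ z x = m x := (hP.2.2 x).symm
  have hx := (hP.1 x).ne'
  rw [← Finset.sum_div]
  rw [Finset.sum_add_distrib, ker_row_sum hG x]
  rw [← Finset.sum_div, h1, div_self hx]
  norm_num

lemma meanKer_symm {μ : V → V → ℝ} {m : V → ℝ} (hP : IsPerron μ m) (x z : V) :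
    m x * meanKer μ m x z = m z * meanKer μ m z x := by
  have hx := (hP.1 x).ne'
  have hz := (hP.1 z).ne'
  unfold meanKer
  field_simp
  ring

lemma meanKer_col [Nontrivial V] {μ : V → V → ℝ} {m : V → ℝ} (hG : IsGraph μ)
    (hP : IsPerron μ m) (z : V) : ∑ x, m x * meanKer μ m x z = m z := by
  calc ∑ x, m x * meanKer μ m x z = ∑ x, m z * meanKer μ m z x := by
        refine Finset.sum_congr rfl fun x _ => meanKer_symm hP x z
    _ = m z * ∑ x, meanKer μ m z x := by rw [Finset.mul_sum]
    _ = m z := by rw [meanKer_row hG hP z, mul_one]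

/-! ### Laplacian facts -/

lemma lap_apply (μ : V → V → ℝ) (m : V → ℝ) (h : V → ℝ) (x : V) :
    lap μ m h x = h x - ∑ z, meanKer μ m x z * h z := by
  simp only [lap, lapMat, Matrix.mulVec, dotProduct, Matrix.sub_apply,
    Matrix.of_apply, Matrix.one_apply, sub_mul, ite_mul, one_mul, zero_mul]
  rw [Finset.sum_sub_distrib]
  congr 1
  simp

lemma lap_eq_sum [Nontrivial V] {μ : V → V → ℝ} {m : V → ℝ} (hG : IsGraph μ)
    (hP : IsPerron μ m) (h : V → ℝ) (x : V) :
    lap μ m h x = ∑ z, meanKer μ m x z * (h x - h z) := by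
  rw [lap_apply]
  have : ∑ z, meanKer μ m x z * (h x - h z)
      = (∑ z, meanKer μ m x z) * h x - ∑ z, meanKer μ m x z * h z := by
    rw [Finset.sum_mul, ← Finset.sum_sub_distrib]
    refine Finset.sum_congr rfl fun z _ => by ring
  rw [this, meanKer_row hG hP x, one_mul]

lemma m_lap [Nontrivial V] {μ : V → V → ℝ} {m : V → ℝ} (hG : IsGraph μ)
    (hP : IsPerron μ m) (h : V → ℝ) : ∑ x, m x * lap μ m h x = 0 := by
  have e : ∀ x, m x * lap μ m h x = m x * h x - ∑ z, m x * meanKer μ m x z * h z := by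
    intro x
    rw [lap_apply, mul_sub, Finset.mul_sum]
    congr 1
    exact Finset.sum_congr rfl fun z _ => by ring
  rw [Finset.sum_congr rfl fun x _ => e x, Finset.sum_sub_distrib]
  rw [Finset.sum_comm]
  have : ∀ z, ∑ x, m x * meanKer μ m x z * h z = m z * h z := by
    intro z
    rw [← Finset.sum_mul, meanKer_col hG hP z]
  rw [Finset.sum_congr rfl fun z _ => this z]
  simp

lemma lap_smul (μ : V → V → ℝ) (m : V → ℝ) (h : V → ℝ) (c : ℝ) (x : V) :
    lap μ m (fun z => c * h z) x = c * lap μ m h x := by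
  rw [lap_apply, lap_apply, mul_sub, Finset.mul_sum]
  congr 1
  exact Finset.sum_congr rfl fun z _ => by ring

lemma lap_of_const [Nontrivial V] {μ : V → V → ℝ} {m : V → ℝ} (hG : IsGraph μ)
    (hP : IsPerron μ m) {h : V → ℝ} (hh : ∀ a b, h a = h b) (x : V) :
    lap μ m h x = 0 := by
  rw [lap_eq_sum hG hP]
  refine Finset.sum_eq_zero fun z _ => ?_
  rw [hh x z]; ring

end AuxConcentration
section AuxConcentration2

variable {V : Type*} [Fintype V] [DecidableEq V]

variable (V) in
/-- The finset of ordered pairs of distinct vertices. -/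
def pairs : Finset (V × V) := Finset.univ.filter fun p => p.1 ≠ p.2

lemma mem_pairs {p : V × V} : p ∈ pairs V ↔ p.1 ≠ p.2 := by simp [pairs]

lemma pairs_nonempty [Nontrivial V] : (pairs V).Nonempty := by
  obtain ⟨a, b, hab⟩ := exists_pair_ne V
  exact ⟨(a, b), mem_pairs.2 hab⟩

/-- The Lipschitz constant of `h` as a max over pairs. -/
noncomputable def lipC [Nontrivial V] (μ : V → V → ℝ) (h : V → ℝ) : ℝ :=
  (pairs V).sup' pairs_nonempty fun p => (h p.2 - h p.1) / gdist μ p.1 p.2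

lemma lipQ_le_lipC [Nontrivial V] (μ : V → V → ℝ) (h : V → ℝ) {x y : V} (hxy : x ≠ y) :
    (h y - h x) / gdist μ x y ≤ lipC μ h := by
  have hm : ((x, y) : V × V) ∈ pairs V := mem_pairs.2 hxy
  exact Finset.le_sup' (fun p : V × V => (h p.2 - h p.1) / gdist μ p.1 p.2) hm

lemma lipC_nonneg [Nontrivial V] {μ : V → V → ℝ} (hG : IsGraph μ) (h : V → ℝ) :
    0 ≤ lipC μ h := by
  obtain ⟨a, b, hab⟩ := exists_pair_ne V
  rcases le_total (h a) (h b) with hle | hle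
  · refine le_trans ?_ (lipQ_le_lipC μ h hab)
    exact div_nonneg (by linarith) (gdist_nonneg' μ a b)
  · refine le_trans ?_ (lipQ_le_lipC μ h (Ne.symm hab))
    exact div_nonneg (by linarith) (gdist_nonneg' μ b a)

lemma sub_le_lip [Nontrivial V] {μ : V → V → ℝ} (hG : IsGraph μ) (h : V → ℝ) (a b : V) :
    h b - h a ≤ lipC μ h * gdist μ a b := by
  rcases eq_or_ne a b with rfl | hab
  · simp [gdist_self']
  · have hd := gdist_pos hG hab
    have := lipQ_le_lipC μ h hab
    rw [div_le_iff₀ hd] at this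
    linarith

lemma lipC_le_one [Nontrivial V] {μ : V → V → ℝ} (hG : IsGraph μ) {h : V → ℝ}
    (hh : ∀ a b, h b - h a ≤ gdist μ a b) : lipC μ h ≤ 1 := by
  refine Finset.sup'_le _ _ fun p hp => ?_
  have hab := mem_pairs.1 hp
  rw [div_le_one (gdist_pos hG hab)]
  exact hh p.1 p.2

lemma lipC_eq_zero_imp [Nontrivial V] {μ : V → V → ℝ} (hG : IsGraph μ) {h : V → ℝ}
    (h0 : lipC μ h = 0) (a b : V) : h a = h b := by
  have h1 := sub_le_lip hG h a b
  have h2 := sub_le_lip hG h b a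
  rw [h0, zero_mul] at h1 h2
  linarith

/-! ### Scalar inequalities -/

lemma exp_ineq0 {u : ℝ} (hu : 0 ≤ u) : Real.exp u - 1 ≤ u * (Real.exp u + 1) / 2 := by
  set ψ : ℝ → ℝ := fun u => u * (Real.exp u + 1) / 2 - (Real.exp u - 1) with hψ
  have hder : ∀ v : ℝ, HasDerivAt ψ ((1 - Real.exp v + v * Real.exp v) / 2) v := by
    intro v
    have h1 : HasDerivAt (fun u : ℝ => u * (Real.exp u + 1)) 
        (1 * (Real.exp v + 1) + v * Real.exp v) v := 
      (hasDerivAt_id v).mul ((Real.hasDerivAt_exp v).add_const 1)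
    have h2 := (h1.div_const 2).sub ((Real.hasDerivAt_exp v).sub_const 1)
    refine h2.congr_deriv ?_
    ring
  have hmono : MonotoneOn ψ (Set.Ici 0) := by
    refine monotoneOn_of_deriv_nonneg (convex_Ici 0) ?_ ?_ ?_
    · have hd : Differentiable ℝ ψ := fun v => (hder v).differentiableAt
      exact hd.continuous.continuousOn
    · intro v hv
      exact ((hder v).differentiableAt).differentiableWithinAt
    · intro v hv
      rw [(hder v).deriv]
      have hv0 : 0 ≤ v := le_of_lt (by simpa using hv)
      have hab : Real.exp v * Real.exp (-v) = 1 := by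
        rw [← Real.exp_add]; simp
      nlinarith [Real.add_one_le_exp (-v), Real.exp_pos v]
  have h0 : ψ 0 ≤ ψ u := hmono (Set.self_mem_Ici) hu hu
  have : ψ 0 = 0 := by simp [hψ]
  rw [this] at h0
  simp only [hψ] at h0
  linarith

lemma scalar_half {a b c : ℝ} (hba : b ≤ a) (hab : a - b ≤ c) :
    (a - b) * (Real.exp a - Real.exp b) ≤ c ^ 2 * (Real.exp a + Real.exp b) / 2 := by
  have hu : 0 ≤ a - b := by linarith
  have hE := exp_ineq0 hu
  have hA : Real.exp a = Real.exp b * Real.exp (a - b) := by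
    rw [← Real.exp_add]; ring_nf
  have hB := Real.exp_pos b
  have hEp := Real.exp_pos (a - b)
  have hsq : (a - b) ^ 2 ≤ c ^ 2 := by nlinarith
  nlinarith [mul_nonneg hu hB.le, mul_le_mul_of_nonneg_left hE (mul_nonneg hu hB.le),
    mul_le_mul_of_nonneg_right hsq (by positivity : (0:ℝ) ≤ (Real.exp (a-b) + 1) * Real.exp b / 2)]

lemma scalar1 {a b c : ℝ} (hab : |a - b| ≤ c) :
    (a - b) * (Real.exp a - Real.exp b) ≤ c ^ 2 * (Real.exp a + Real.exp b) / 2 := by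
  rcases le_total b a with h | h
  · exact scalar_half h (by rw [abs_of_nonneg (by linarith : (0:ℝ) ≤ a - b)] at hab; exact hab)
  · have hba : b - a ≤ c := by
      rw [abs_sub_comm, abs_of_nonneg (by linarith : (0:ℝ) ≤ b - a)] at hab; exact hab
    have h2 := scalar_half h hba
    have e : (a - b) * (Real.exp a - Real.exp b) = (b - a) * (Real.exp b - Real.exp a) := by ring
    rw [e]
    linarith

/-! ### Continuity of finite sup -/

lemma continuous_finset_sup' {ι : Type*} {F : Finset ι} (hF : F.Nonempty)
    {φ : ι → ℝ → ℝ} (hφ : ∀ i, Continuous (φ i)) :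
    Continuous fun s => F.sup' hF (fun i => φ i s) := by
  induction hF using Finset.Nonempty.cons_induction with
  | singleton a => 
      have : (fun s => ({a} : Finset ι).sup' (Finset.singleton_nonempty a) fun i => φ i s)
          = φ a := by
        funext s; simp
      rw [this]; exact hφ a
  | cons a s ha hs ih => 
      simp only [Finset.sup'_cons hs]
      exact (hφ a).max ih

end AuxConcentration2
section AuxConcentration3

variable {V : Type*} [Fintype V] [DecidableEq V]

attribute [local instance] Matrix.linftyOpNormedRing Matrix.linftyOpNormedAlgebra

/-- Evaluation of `mulVec` as a continuous linear map. -/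
noncomputable def entryCLM (f : V → ℝ) (x : V) : Matrix V V ℝ →L[ℝ] ℝ :=
  LinearMap.toContinuousLinearMap
    { toFun := fun M => M.mulVec f x
      map_add' := by intro M N; simp [Matrix.add_mulVec]
      map_smul' := by intro c M; simp [Matrix.smul_mulVec] }

lemma hasDerivAt_heat (μ : V → V → ℝ) (m : V → ℝ) (f : V → ℝ) (t : ℝ) (x : V) :
    HasDerivAt (fun s => heatSG μ m s f x) (-(lap μ m (heatSG μ m t f) x)) t := by
  have h1 : HasDerivAt (fun u : ℝ => NormedSpace.exp (u • (-(lapMat μ m))))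
      ((-(lapMat μ m)) * NormedSpace.exp (t • (-(lapMat μ m)))) t :=
    hasDerivAt_exp_smul_const' _ t
  have h2 := (entryCLM f x).hasFDerivAt.comp_hasDerivAt t h1
  have e : ∀ s : ℝ, heatSG μ m s f x
      = entryCLM f x (NormedSpace.exp (s • (-(lapMat μ m)))) := by
    intro s
    simp [heatSG, heatMat, entryCLM, smul_neg, neg_smul]
  simp only [Function.comp_def] at h2
  rw [show (fun s => heatSG μ m s f x)
      = fun s => entryCLM f x (NormedSpace.exp (s • (-(lapMat μ m)))) from funext e]
  refine h2.congr_deriv (Eq.symm ?_)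
  · show _ = entryCLM f x _
    have hh : heatSG μ m t f = (NormedSpace.exp (t • (-(lapMat μ m)))).mulVec f := by
      funext y
      simp [heatSG, heatMat, smul_neg, neg_smul]
    rw [show lap μ m (heatSG μ m t f) x = (lapMat μ m).mulVec (heatSG μ m t f) x from rfl, hh]
    simp [entryCLM, Matrix.neg_mulVec, Matrix.mulVec_mulVec]

lemma heatSG_zero (μ : V → V → ℝ) (m : V → ℝ) (f : V → ℝ) : heatSG μ m 0 f = f := by
  funext x
  simp [heatSG, heatMat, NormedSpace.exp_zero, Matrix.one_mulVec]

lemma mean_heat [Nontrivial V] {μ : V → V → ℝ} {m : V → ℝ} (hG : IsGraph μ)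
    (hP : IsPerron μ m) (f : V → ℝ) (t : ℝ) :
    ∑ x, m x * heatSG μ m t f x = ∑ x, m x * f x := by
  set M : ℝ → ℝ := fun s => ∑ x, m x * heatSG μ m s f x with hM
  have hder : ∀ s, HasDerivAt M 0 s := by
    intro s
    have h1 : HasDerivAt M (∑ x, m x * (-(lap μ m (heatSG μ m s f) x))) s := by
      apply HasDerivAt.fun_sum
      intro x _
      exact (hasDerivAt_heat μ m f s x).const_mul (m x)
    have h2 : (∑ x, m x * (-(lap μ m (heatSG μ m s f) x))) = 0 := by
      have := m_lap hG hP (heatSG μ m s f)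
      have e : ∀ x : V, m x * (-(lap μ m (heatSG μ m s f) x))
          = -(m x * lap μ m (heatSG μ m s f) x) := fun x => by ring
      rw [Finset.sum_congr rfl fun x _ => e x, Finset.sum_neg_distrib, this, neg_zero]
    rwa [h2] at h1
  have hdiff : Differentiable ℝ M := fun s => (hder s).differentiableAt
  have hconst := is_const_of_deriv_eq_zero hdiff (fun s => (hder s).deriv) t 0
  rw [hM] at hconst
  simpa [heatSG_zero] using hconst

lemma curv_bound [Nontrivial V] {μ : V → V → ℝ} {m : V → ℝ} {K : ℝ} (hG : IsGraph μ)
    (hK : 0 < K) (hcurv : ∀ x y : V, x ≠ y → K ≤ ricci μ m x y)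
    (h : V → ℝ) (c : ℝ) (hc : 0 < c) (hLip : ∀ a b, h b - h a ≤ c * gdist μ a b)
    {x y : V} (hxy : x ≠ y) (hx : h y - h x = c * gdist μ x y) :
    K * (c * gdist μ x y) ≤ lap μ m h y - lap μ m h x := by
  have hd := gdist_pos hG hxy
  set h' : V → ℝ := fun z => c⁻¹ * h z with hh'
  have hLip' : ∀ a b, h' b - h' a ≤ gdist μ a b := by
    intro a b
    have := hLip a b
    calc h' b - h' a = c⁻¹ * (h b - h a) := by rw [hh']; ring
      _ ≤ c⁻¹ * (c * gdist μ a b) := by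
          apply mul_le_mul_of_nonneg_left this (by positivity)
      _ = gdist μ a b := by field_simp
  have hgrad : (h' y - h' x) / gdist μ x y = 1 := by
    rw [hh']
    have : c⁻¹ * h y - c⁻¹ * h x = c⁻¹ * (h y - h x) := by ring
    rw [this, hx]
    field_simp
  set r₀ : ℝ := (lap μ m h' y - lap μ m h' x) / gdist μ x y with hr₀
  have hmem : r₀ ∈ {r : ℝ | ∃ f : V → ℝ, (∀ a b, f b - f a ≤ gdist μ a b) ∧
      (f y - f x) / gdist μ x y = 1 ∧
      r = (lap μ m f y - lap μ m f x) / gdist μ x y} := ⟨h', hLip', hgrad, rfl⟩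
  have hKr : K ≤ r₀ := by
    by_cases hb : BddBelow {r : ℝ | ∃ f : V → ℝ, (∀ a b, f b - f a ≤ gdist μ a b) ∧
        (f y - f x) / gdist μ x y = 1 ∧
        r = (lap μ m f y - lap μ m f x) / gdist μ x y}
    · exact le_trans (hcurv x y hxy) (csInf_le hb hmem)
    · exfalso
      have h0 : ricci μ m x y = 0 := Real.sInf_of_not_bddBelow hb
      have h1 := hcurv x y hxy
      rw [h0] at h1
      linarith
  have hlapeq : ∀ z, lap μ m h' z = c⁻¹ * lap μ m h z := fun z => lap_smul μ m h c⁻¹ z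
  rw [hr₀, hlapeq, hlapeq] at hKr
  rw [le_div_iff₀ hd] at hKr
  have h2 := mul_le_mul_of_nonneg_left hKr hc.le
  have h4 : c * (c⁻¹ * lap μ m h y - c⁻¹ * lap μ m h x)
      = lap μ m h y - lap μ m h x := by
    field_simp
  rw [h4] at h2
  linarith
end AuxConcentration3
section AuxConcentration4
open Topology Filter Set

variable {V : Type*} [Fintype V] [DecidableEq V]

lemma lipC_contraction [Nontrivial V] {μ : V → V → ℝ} {m : V → ℝ} {K : ℝ}
    (hG : IsGraph μ) (hP : IsPerron μ m) (hK : 0 < K)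
    (hcurv : ∀ x y : V, x ≠ y → K ≤ ricci μ m x y)
    (f : V → ℝ) (hf : ∀ a b, f b - f a ≤ gdist μ a b)
    {t : ℝ} (ht : 0 ≤ t) : lipC μ (heatSG μ m t f) ≤ Real.exp (-K * t) := by
  set g : ℝ → V → ℝ := fun s => heatSG μ m s f with hg
  set L : ℝ → ℝ := fun s => lipC μ (g s) with hL
  have hgc : ∀ x : V, Continuous fun s => g s x := fun x =>
    continuous_iff_continuousAt.2 fun s => (hasDerivAt_heat μ m f s x).continuousAt
  have hLc : Continuous L := by
    rw [hL]
    unfold lipC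
    exact continuous_finset_sup' pairs_nonempty fun p =>
      ((hgc p.2).sub (hgc p.1)).div_const _
  have hder : ∀ (s : ℝ) (p : V × V),
      HasDerivAt (fun z => (g z p.2 - g z p.1) / gdist μ p.1 p.2)
        ((-(lap μ m (g s) p.2) - -(lap μ m (g s) p.1)) / gdist μ p.1 p.2) s :=
    fun s p => ((hasDerivAt_heat μ m f s p.2).sub (hasDerivAt_heat μ m f s p.1)).div_const _
  have hkey : ∀ (s : ℝ), ∀ p ∈ pairs V, (g s p.2 - g s p.1) / gdist μ p.1 p.2 = L s →
      (-(lap μ m (g s) p.2) - -(lap μ m (g s) p.1)) / gdist μ p.1 p.2 ≤ -K * L s := by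
    intro s p hp hact
    have hxy : p.1 ≠ p.2 := mem_pairs.1 hp
    have hd := gdist_pos hG hxy
    rcases (lipC_nonneg hG (g s)).lt_or_eq with hpos | hzero
    · -- L s > 0 : use the curvature hypothesis
      have hLs : 0 < L s := hpos
      have hx : g s p.2 - g s p.1 = L s * gdist μ p.1 p.2 := by
        rw [← hact]; field_simp
      have hcb := curv_bound hG hK hcurv (g s) (L s) hLs
        (fun a b => sub_le_lip hG (g s) a b) hxy hx
      rw [div_le_iff₀ hd]
      nlinarith [hcb]
    · -- L s = 0 : the function is constant and the Laplacian vanishes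
      have hzero' : lipC μ (g s) = 0 := hzero.symm
      have hconst : ∀ a b : V, g s a = g s b := lipC_eq_zero_imp hG hzero'
      have h1 : lap μ m (g s) p.1 = 0 := lap_of_const hG hP hconst p.1
      have h2 : lap μ m (g s) p.2 = 0 := lap_of_const hG hP hconst p.2
      have hz2 : L s = 0 := hzero.symm
      rw [h1, h2, hz2]
      simp
  -- Grönwall
  have grb := le_gronwallBound_of_liminf_deriv_right_le
    (f := L) (f' := fun s => -K * L s) (δ := 1) (K := -K) (ε := 0) (a := 0) (b := t)
    hLc.continuousOn ?_ ?_ ?_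
  · have := grb t ⟨ht, le_refl t⟩
    rw [gronwallBound_ε0] at this
    simpa using this
  · -- slope condition
    intro s hs r hr
    apply Filter.Eventually.frequently
    have hev : ∀ p ∈ pairs V, ∀ᶠ z in 𝓝[>] s,
        (g z p.2 - g z p.1) / gdist μ p.1 p.2 < L s + r * (z - s) := by
      intro p hp
      have hle : (g s p.2 - g s p.1) / gdist μ p.1 p.2 ≤ L s :=
        Finset.le_sup' (fun q : V × V => (g s q.2 - g s q.1) / gdist μ q.1 q.2) hp
      rcases eq_or_lt_of_le hle with heq | hlt
      · -- active pair
        have hD := hder s p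
        have hDle := hkey s p hp heq
        have hDr : (-(lap μ m (g s) p.2) - -(lap μ m (g s) p.1)) / gdist μ p.1 p.2 < r :=
          lt_of_le_of_lt hDle hr
        have hslope := hasDerivAt_iff_tendsto_slope.1 hD
        have hev2 := hslope.eventually (gt_mem_nhds hDr)
        have hev3 : ∀ᶠ z in 𝓝[>] s,
            slope (fun z => (g z p.2 - g z p.1) / gdist μ p.1 p.2) s z < r :=
          hev2.filter_mono (nhdsWithin_mono s fun z hz => ne_of_gt hz)
        filter_upwards [hev3, self_mem_nhdsWithin] with z hz hz'
        have hzs : 0 < z - s := sub_pos.2 hz'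
        rw [slope_def_field, div_lt_iff₀ hzs] at hz
        have : (g z p.2 - g z p.1) / gdist μ p.1 p.2
            - (g s p.2 - g s p.1) / gdist μ p.1 p.2 < r * (z - s) := by linarith
        linarith [heq ▸ this]
      · -- inactive pair
        have hc : ContinuousAt (fun z => (g z p.2 - g z p.1) / gdist μ p.1 p.2) s :=
          (hder s p).continuousAt
        set φs := (g s p.2 - g s p.1) / gdist μ p.1 p.2 with hφs
        set γ := L s - φs with hγ
        have hγ0 : 0 < γ := by rw [hγ]; linarith
        have hev1 : ∀ᶠ z in 𝓝 s, (g z p.2 - g z p.1) / gdist μ p.1 p.2 < φs + γ / 2 :=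
          hc.eventually (gt_mem_nhds (by linarith))
        set δ₀ := γ / (2 * (|r| + 1)) with hδ₀
        have hδ₀0 : 0 < δ₀ := by positivity
        have hev2 : ∀ᶠ z in 𝓝 s, |z - s| < δ₀ := by
          filter_upwards [Metric.ball_mem_nhds s hδ₀0] with z hz
          simpa [Real.dist_eq] using hz
        have hev3 := (hev1.and hev2).filter_mono (nhdsWithin_le_nhds (s := Set.Ioi s))
        filter_upwards [hev3, self_mem_nhdsWithin] with z hz hz'
        obtain ⟨h1, h2⟩ := hz
        have hzs : 0 < z - s := sub_pos.2 hz'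
        have ha : (0:ℝ) ≤ |r| := abs_nonneg r
        have hhalf : |r| / (2 * (|r| + 1)) ≤ 1 / 2 := by
          rw [div_le_div_iff₀ (by positivity) two_pos]
          nlinarith
        have h3 : |r| * δ₀ ≤ γ / 2 := by
          calc |r| * δ₀ = γ * (|r| / (2 * (|r| + 1))) := by rw [hδ₀]; ring
            _ ≤ γ * (1 / 2) := mul_le_mul_of_nonneg_left hhalf hγ0.le
            _ = γ / 2 := by ring
        have habs : |r| * |z - s| ≤ |r| * δ₀ := mul_le_mul_of_nonneg_left h2.le ha
        have h4 : -(r * (z - s)) ≤ |r| * |z - s| := by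
          rw [← abs_mul]; exact neg_le_abs _
        have hγdef : φs = L s - γ := by rw [hγ]; ring
        linarith [h1]
    filter_upwards [(eventually_all_finset (pairs V)).2 hev, self_mem_nhdsWithin]
      with z hz hz'
    have hzs : 0 < z - s := sub_pos.2 hz'
    have hLz : L z < L s + r * (z - s) :=
      (Finset.sup'_lt_iff pairs_nonempty).2 fun p hp => hz p hp
    rw [inv_mul_lt_iff₀ hzs]
    linarith
  · -- initial value
    have : L 0 = lipC μ f := by rw [hL]; simp [hg, heatSG_zero]
    rw [this]
    exact lipC_le_one hG hf
  · -- differential inequality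
    intro s hs
    rw [add_zero]

end AuxConcentration4
section AuxConcentration5
open Topology Filter Set

variable {V : Type*} [Fintype V] [DecidableEq V]

lemma core_ineq [Nontrivial V] {μ : V → V → ℝ} {m : V → ℝ} (hG : IsGraph μ)
    (hP : IsPerron μ m) (h : V → ℝ) (c : ℝ)
    (hedge : ∀ x z : V, 0 < meanKer μ m x z → |h x - h z| ≤ c) :
    ∑ x, m x * (lap μ m h x * Real.exp (h x))
      ≤ c ^ 2 / 2 * ∑ x, m x * Real.exp (h x) := by
  set w : V → V → ℝ := fun x z => m x * meanKer μ m x z with hw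
  have hw_nonneg : ∀ x z, 0 ≤ w x z := fun x z =>
    mul_nonneg (hP.1 x).le (meanKer_nonneg hG hP x z)
  have hw_symm : ∀ x z, w x z = w z x := fun x z => meanKer_symm hP x z
  -- rewrite LHS as a double sum
  have hLHS : ∑ x, m x * (lap μ m h x * Real.exp (h x))
      = ∑ x, ∑ z, w x z * ((h x - h z) * Real.exp (h x)) := by
    refine Finset.sum_congr rfl fun x _ => ?_
    rw [lap_eq_sum hG hP, Finset.sum_mul, Finset.mul_sum]
    refine Finset.sum_congr rfl fun z _ => by rw [hw]; ring
  -- symmetrization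
  have hsymm : (2 : ℝ) * ∑ x, ∑ z, w x z * ((h x - h z) * Real.exp (h x))
      = ∑ x, ∑ z, w x z * ((h x - h z) * (Real.exp (h x) - Real.exp (h z))) := by
    have hswap : ∑ x, ∑ z, w x z * ((h x - h z) * Real.exp (h z))
        = -∑ x, ∑ z, w x z * ((h x - h z) * Real.exp (h x)) := by
      rw [Finset.sum_comm, ← Finset.sum_neg_distrib]
      refine Finset.sum_congr rfl fun z _ => ?_
      rw [← Finset.sum_neg_distrib]
      refine Finset.sum_congr rfl fun x _ => ?_
      rw [hw_symm z x]
      ring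
    have hexpand : ∑ x, ∑ z, w x z * ((h x - h z) * (Real.exp (h x) - Real.exp (h z)))
        = ∑ x, ∑ z, w x z * ((h x - h z) * Real.exp (h x))
          - ∑ x, ∑ z, w x z * ((h x - h z) * Real.exp (h z)) := by
      rw [← Finset.sum_sub_distrib]
      refine Finset.sum_congr rfl fun x _ => ?_
      rw [← Finset.sum_sub_distrib]
      refine Finset.sum_congr rfl fun z _ => by ring
    rw [hexpand, hswap]
    ring
  -- termwise bound on the symmetrized sum
  have hterm : ∑ x, ∑ z, w x z * ((h x - h z) * (Real.exp (h x) - Real.exp (h z)))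
      ≤ ∑ x, ∑ z, w x z * (c ^ 2 * (Real.exp (h x) + Real.exp (h z)) / 2) := by
    refine Finset.sum_le_sum fun x _ => Finset.sum_le_sum fun z _ => ?_
    rcases (hw_nonneg x z).lt_or_eq with hpos | hzero
    · have hQ : 0 < meanKer μ m x z := by
        by_contra hc0
        push_neg at hc0
        have := meanKer_nonneg hG hP x z
        have : meanKer μ m x z = 0 := le_antisymm hc0 this
        rw [hw] at hpos
        simp [this] at hpos
      have := scalar1 (hedge x z hQ)
      exact mul_le_mul_of_nonneg_left this (hw_nonneg x z)
    · rw [← hzero]; simp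
  -- compute the RHS double sum
  have hrow : ∀ x, ∑ z, w x z = m x := by
    intro x
    rw [hw]
    simp only
    rw [← Finset.mul_sum, meanKer_row hG hP, mul_one]
  have hcol : ∀ z, ∑ x, w x z = m z := fun z => meanKer_col hG hP z
  have hRHS : ∑ x, ∑ z, w x z * (c ^ 2 * (Real.exp (h x) + Real.exp (h z)) / 2)
      = c ^ 2 * ∑ x, m x * Real.exp (h x) := by
    have e1 : ∀ x z : V, w x z * (c ^ 2 * (Real.exp (h x) + Real.exp (h z)) / 2)
        = c ^ 2 / 2 * (w x z * Real.exp (h x)) + c ^ 2 / 2 * (w x z * Real.exp (h z)) := by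
      intro x z; ring
    rw [Finset.sum_congr rfl fun x _ => Finset.sum_congr rfl fun z _ => e1 x z]
    rw [Finset.sum_congr rfl fun x _ => Finset.sum_add_distrib, Finset.sum_add_distrib]
    have e2 : ∑ x, ∑ z, c ^ 2 / 2 * (w x z * Real.exp (h x))
        = c ^ 2 / 2 * ∑ x, m x * Real.exp (h x) := by
      rw [Finset.mul_sum]
      refine Finset.sum_congr rfl fun x _ => ?_
      rw [← Finset.mul_sum, ← Finset.sum_mul, hrow x]
    have e3 : ∑ x, ∑ z, c ^ 2 / 2 * (w x z * Real.exp (h z))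
        = c ^ 2 / 2 * ∑ z, m z * Real.exp (h z) := by
      rw [Finset.sum_comm, Finset.mul_sum]
      refine Finset.sum_congr rfl fun z _ => ?_
      rw [← Finset.mul_sum, ← Finset.sum_mul, hcol z]
    rw [e2, e3]
    ring
  rw [hLHS]
  nlinarith [hsymm, hterm, hRHS.symm ▸ hterm]

end AuxConcentration5
section AuxConcentration6
open Topology Filter Set

variable {V : Type*} [Fintype V] [DecidableEq V]

lemma laplace_est [Nontrivial V] {μ : V → V → ℝ} {m : V → ℝ} {K Λ : ℝ}
    (hG : IsGraph μ) (hP : IsPerron μ m) (hK : 0 < K)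
    (hcurv : ∀ x y : V, x ≠ y → K ≤ ricci μ m x y) (hΛ : 1 ≤ Λ)
    (hD : ∀ x y : V, (0 < μ x y ∨ 0 < μ y x) → max (gdist μ x y) (gdist μ y x) ≤ Λ)
    (f : V → ℝ) (hf : ∀ a b, f b - f a ≤ gdist μ a b)
    (lam : ℝ) (hlam : 0 < lam) :
    ∑ x, m x * Real.exp (lam * f x)
      ≤ Real.exp (lam * (∑ x, m x * f x) + lam ^ 2 * Λ ^ 2 / (4 * K)) := by
  have hΛ0 : (0:ℝ) < Λ := lt_of_lt_of_le one_pos hΛ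
  set g : ℝ → V → ℝ := fun s => heatSG μ m s f with hg
  set F : ℝ → ℝ := fun s => ∑ x, m x * Real.exp (lam * g s x) with hF
  have hF0 : ∀ s, 0 < F s := fun s =>
    Finset.sum_pos (fun x _ => mul_pos (hP.1 x) (Real.exp_pos _)) Finset.univ_nonempty
  set F' : ℝ → ℝ :=
    fun s => ∑ x, m x * (Real.exp (lam * g s x) * (lam * -(lap μ m (g s) x))) with hF'
  have hFd : ∀ s, HasDerivAt F (F' s) s := by
    intro s
    apply HasDerivAt.fun_sum
    intro x _
    have h1 : HasDerivAt (fun z => g z x) (-(lap μ m (g s) x)) s := hasDerivAt_heat μ m f s x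
    exact ((h1.const_mul lam).exp).const_mul (m x)
  -- the differential inequality
  have hbound : ∀ s : ℝ, 0 ≤ s →
      -(lam ^ 2 * Λ ^ 2 / 2) * Real.exp (-(2 * K) * s) * F s ≤ F' s := by
    intro s hs
    set h : V → ℝ := fun x => lam * g s x with hh
    set c : ℝ := lam * (Real.exp (-K * s) * Λ) with hc
    have hLip := lipC_contraction hG hP hK hcurv f hf hs
    have hL0 := lipC_nonneg hG (g s)
    have hedge : ∀ x z : V, 0 < meanKer μ m x z → |h x - h z| ≤ c := by
      intro x z hQ
      have hxz : x ≠ z := meanKer_pos_ne hG hQ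
      have hDxz := hD x z (meanKer_pos_imp hG hP hQ)
      have hd1 : gdist μ x z ≤ Λ := le_trans (le_max_left _ _) hDxz
      have hd2 : gdist μ z x ≤ Λ := le_trans (le_max_right _ _) hDxz
      have e1 : g s x - g s z ≤ lipC μ (g s) * gdist μ z x := sub_le_lip hG (g s) z x
      have e2 : g s z - g s x ≤ lipC μ (g s) * gdist μ x z := sub_le_lip hG (g s) x z
      have hLZ1 : lipC μ (g s) * gdist μ z x ≤ Real.exp (-K * s) * Λ :=
        mul_le_mul hLip hd2 (gdist_nonneg' μ z x) (Real.exp_pos _).le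
      have hLZ2 : lipC μ (g s) * gdist μ x z ≤ Real.exp (-K * s) * Λ :=
        mul_le_mul hLip hd1 (gdist_nonneg' μ x z) (Real.exp_pos _).le
      have habs : |g s x - g s z| ≤ Real.exp (-K*s) * Λ :=
        abs_le.2 ⟨by linarith, by linarith⟩
      calc |h x - h z| = lam * |g s x - g s z| := by
            rw [hh]
            rw [show lam * g s x - lam * g s z = lam * (g s x - g s z) by ring,
              abs_mul, abs_of_pos hlam]
        _ ≤ lam * (Real.exp (-K*s) * Λ) := mul_le_mul_of_nonneg_left habs hlam.le
        _ = c := by rw [hc]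
    have hcore := core_ineq hG hP h c hedge
    have hlapmul : ∀ x, lap μ m h x = lam * lap μ m (g s) x :=
      fun x => lap_smul μ m (g s) lam x
    have hF'eq : F' s = -∑ x, m x * (lap μ m h x * Real.exp (h x)) := by
      rw [hF', ← Finset.sum_neg_distrib]
      refine Finset.sum_congr rfl fun x _ => ?_
      rw [hlapmul x]
      simp only [hh]
      ring
    have hFeq : F s = ∑ x, m x * Real.exp (h x) := by rw [hF]
    have hcsq : c ^ 2 = lam ^ 2 * Λ ^ 2 * Real.exp (-(2*K)*s) := by
      have he : Real.exp (-K*s) * Real.exp (-K*s) = Real.exp (-(2*K)*s) := by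
        rw [← Real.exp_add]; ring_nf
      calc c ^ 2 = lam ^ 2 * Λ ^ 2 * (Real.exp (-K*s) * Real.exp (-K*s)) := by
            rw [hc]; ring
        _ = lam ^ 2 * Λ ^ 2 * Real.exp (-(2*K)*s) := by rw [he]
    rw [hF'eq, hFeq]
    rw [hcsq] at hcore
    linarith [hcore]
  set C : ℝ := lam ^ 2 * Λ ^ 2 / (4 * K) with hC
  have hC0 : 0 ≤ C := by positivity
  set H : ℝ → ℝ := fun s => Real.log (F s) - C * Real.exp (-(2*K) * s) with hH
  have hHd : ∀ s, HasDerivAt H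
      (F' s / F s + lam ^ 2 * Λ ^ 2 / 2 * Real.exp (-(2*K)*s)) s := by
    intro s
    have h1 := (hFd s).log (hF0 s).ne'
    have h2 : HasDerivAt (fun u : ℝ => Real.exp (-(2*K) * u))
        (Real.exp (-(2*K)*s) * -(2*K)) s := by
      have h2a : HasDerivAt (fun u : ℝ => -(2*K) * u) (-(2*K)) s := by
        simpa using (hasDerivAt_id s).const_mul (-(2*K))
      exact h2a.exp
    have h3 := h1.sub (h2.const_mul C)
    refine h3.congr_deriv ?_
    rw [hC]
    field_simp
    ring
  have hmono : MonotoneOn H (Set.Ici 0) := by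
    refine monotoneOn_of_deriv_nonneg (convex_Ici 0) ?_ ?_ ?_
    · have hd : Differentiable ℝ H := fun s => (hHd s).differentiableAt
      exact hd.continuous.continuousOn
    · intro s _
      exact ((hHd s).differentiableAt).differentiableWithinAt
    · intro s hsI
      have hs : 0 ≤ s := le_of_lt (by simpa using hsI)
      rw [(hHd s).deriv]
      have h1 := hF0 s
      have h2 : -(lam^2*Λ^2/2) * Real.exp (-(2*K)*s) ≤ F' s / F s := by
        rw [le_div_iff₀ h1]
        have := hbound s hs
        linarith
      linarith
  have hFT : ∀ T : ℝ, 0 ≤ T → F 0 ≤ F T * Real.exp C := by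
    intro T hT
    have hHT := hmono self_mem_Ici hT hT
    have e0 : Real.exp (-(2*K)*(0:ℝ)) = 1 := by norm_num
    have hCe : 0 ≤ C * Real.exp (-(2*K)*T) :=
      mul_nonneg hC0 (Real.exp_pos _).le
    have h2 : Real.log (F 0) ≤ Real.log (F T) + C := by
      simp only [hH] at hHT
      rw [e0] at hHT
      linarith
    calc F 0 = Real.exp (Real.log (F 0)) := (Real.exp_log (hF0 0)).symm
      _ ≤ Real.exp (Real.log (F T) + C) := Real.exp_le_exp.2 h2
      _ = F T * Real.exp C := by rw [Real.exp_add, Real.exp_log (hF0 T)]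
  -- convergence of the heat semigroup to the mean
  set mf : ℝ := ∑ x, m x * f x with hmf
  have hmean : ∀ T : ℝ, ∑ x, m x * g T x = mf := fun T => mean_heat hG hP f T
  obtain ⟨p0, hp0⟩ := (pairs_nonempty : (pairs V).Nonempty)
  set D : ℝ := (pairs V).sup' pairs_nonempty (fun p => gdist μ p.1 p.2) with hDD
  have hDnn : 0 ≤ D :=
    le_trans (gdist_nonneg' μ p0.1 p0.2)
      (Finset.le_sup' (fun p : V × V => gdist μ p.1 p.2) hp0)
  have hgd_le : ∀ a b : V, a ≠ b → gdist μ a b ≤ D := fun a b hab =>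
    Finset.le_sup' (f := fun p : V × V => gdist μ p.1 p.2) (mem_pairs.2 (show ((a,b) : V × V).1 ≠ (a,b).2 from hab))
  have hconv : ∀ x : V, Tendsto (fun T => g T x) atTop (𝓝 mf) := by
    intro x
    have key : ∀ T : ℝ, 0 ≤ T → |g T x - mf| ≤ Real.exp (-K*T) * D := by
      intro T hT
      have hLT := lipC_contraction hG hP hK hcurv f hf hT
      have hL0 := lipC_nonneg hG (g T)
      have e0 : g T x - mf = ∑ z, m z * (g T x - g T z) := by
        have e1 : ∀ z : V, m z * (g T x - g T z) = m z * g T x - m z * g T z :=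
          fun z => by ring
        rw [Finset.sum_congr rfl fun z _ => e1 z, Finset.sum_sub_distrib,
          ← Finset.sum_mul, hP.2.1, one_mul, hmean T]
      rw [e0]
      calc |∑ z, m z * (g T x - g T z)| ≤ ∑ z, |m z * (g T x - g T z)| :=
            Finset.abs_sum_le_sum_abs _ _
        _ ≤ ∑ z, m z * (Real.exp (-K*T) * D) := by
            refine Finset.sum_le_sum fun z _ => ?_
            rw [abs_mul, abs_of_pos (hP.1 z)]
            refine mul_le_mul_of_nonneg_left ?_ (hP.1 z).le
            rcases eq_or_ne z x with rfl | hzx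
            · simpa using mul_nonneg (Real.exp_pos (-K*T)).le hDnn
            · have e1 : g T x - g T z ≤ lipC μ (g T) * gdist μ z x :=
                sub_le_lip hG (g T) z x
              have e2 : g T z - g T x ≤ lipC μ (g T) * gdist μ x z :=
                sub_le_lip hG (g T) x z
              have hb1 : lipC μ (g T) * gdist μ z x ≤ Real.exp (-K*T) * D :=
                mul_le_mul hLT (hgd_le z x hzx) (gdist_nonneg' μ z x) (Real.exp_pos _).le
              have hb2 : lipC μ (g T) * gdist μ x z ≤ Real.exp (-K*T) * D :=
                mul_le_mul hLT (hgd_le x z (Ne.symm hzx)) (gdist_nonneg' μ x z)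
                  (Real.exp_pos _).le
              exact abs_le.2 ⟨by linarith, by linarith⟩
        _ = Real.exp (-K*T) * D := by rw [← Finset.sum_mul, hP.2.1, one_mul]
    have h1 : Tendsto (fun T : ℝ => -K * T) atTop atBot := by
      have hKT : Tendsto (fun T : ℝ => K * T) atTop atTop :=
        Tendsto.const_mul_atTop hK tendsto_id
      have h1' : Tendsto (fun T : ℝ => -(K * T)) atTop atBot :=
        tendsto_neg_atTop_atBot.comp hKT
      have he : (fun T : ℝ => -K * T) = fun T : ℝ => -(K * T) := by
        funext T; ring
      rw [he]
      exact h1'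
    have h0 : Tendsto (fun T => Real.exp (-K*T) * D) atTop (𝓝 0) := by
      have h2 := (Real.tendsto_exp_atBot.comp h1).mul_const D
      simpa using h2
    have h3 : Tendsto (fun T => g T x - mf) atTop (𝓝 0) := by
      apply squeeze_zero_norm' ?_ h0
      filter_upwards [eventually_ge_atTop (0:ℝ)] with T hT
      simpa [Real.norm_eq_abs] using key T hT
    have h4 := h3.add_const mf
    simpa using h4
  have hFtend : Tendsto F atTop (𝓝 (Real.exp (lam * mf))) := by
    have hterm : ∀ x : V, Tendsto (fun T => m x * Real.exp (lam * g T x)) atTop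
        (𝓝 (m x * Real.exp (lam * mf))) := by
      intro x
      exact (((Real.continuous_exp.tendsto _).comp ((hconv x).const_mul lam)).const_mul (m x))
    have hsum := tendsto_finset_sum Finset.univ (fun x _ => hterm x)
    have hval : ∑ x, m x * Real.exp (lam * mf) = Real.exp (lam * mf) := by
      rw [← Finset.sum_mul, hP.2.1, one_mul]
    rw [hF]
    rw [← hval]
    exact hsum
  have hle : F 0 ≤ Real.exp (lam * mf) * Real.exp C := by
    refine ge_of_tendsto (hFtend.mul_const (Real.exp C)) ?_
    filter_upwards [eventually_ge_atTop (0:ℝ)] with T hT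
    exact hFT T hT
  have hF0eq : F 0 = ∑ x, m x * Real.exp (lam * f x) := by
    rw [hF]
    refine Finset.sum_congr rfl fun x _ => ?_
    rw [hg]
    simp [heatSG_zero]
  rw [← hF0eq, Real.exp_add]
  exact hle

end AuxConcentration6
/-- Theorem 1.2: concentration of measure inequality for directed graphs of positive
Ricci curvature with bounded jumps. -/
theorem concentration_of_measure {V : Type*} [Fintype V] [DecidableEq V] [Nonempty V]
    (μ : V → V → ℝ) (m : V → ℝ) (K Λ : ℝ)
    (hG : IsGraph μ) (hP : IsPerron μ m) (hK : 0 < K)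
    (hcurv : ∀ x y : V, x ≠ y → K ≤ ricci μ m x y) (hΛ : 1 ≤ Λ)
    (hD : ∀ x y : V, (0 < μ x y ∨ 0 < μ y x) → max (gdist μ x y) (gdist μ y x) ≤ Λ) :
    ∀ f : V → ℝ, (∀ a b, f b - f a ≤ gdist μ a b) → ∀ r : ℝ, 0 < r →
      ∑ x ∈ Finset.univ.filter (fun x => (∑ z, f z * m z) + r ≤ f x), m x
        ≤ Real.exp (-(K * r ^ 2) / Λ ^ 2) := by
  intro f hf r hr
  by_cases hV : ∃ x y : V, x ≠ y
  · obtain ⟨x₀, y₀, hxy⟩ := hV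
    haveI : Nontrivial V := ⟨x₀, y₀, hxy⟩
    have hΛ0 : (0:ℝ) < Λ := lt_of_lt_of_le one_pos hΛ
    set lam : ℝ := 2 * K * r / Λ ^ 2 with hlamdef
    have hlam : 0 < lam := by positivity
    have hL := laplace_est hG hP hK hcurv hΛ hD f hf lam hlam
    set mf : ℝ := ∑ z, f z * m z with hmf
    have hmf' : ∑ x, m x * f x = mf := by
      rw [hmf]; exact Finset.sum_congr rfl fun z _ => mul_comm _ _
    rw [hmf'] at hL
    set S := Finset.univ.filter (fun x : V => mf + r ≤ f x) with hS
    have h1 : (∑ x ∈ S, m x) * Real.exp (lam * (mf + r))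
        ≤ ∑ x ∈ S, m x * Real.exp (lam * f x) := by
      rw [Finset.sum_mul]
      refine Finset.sum_le_sum fun x hx => ?_
      have hxS : mf + r ≤ f x := (Finset.mem_filter.1 hx).2
      exact mul_le_mul_of_nonneg_left
        (Real.exp_le_exp.2 (mul_le_mul_of_nonneg_left hxS hlam.le)) (hP.1 x).le
    have h2 : ∑ x ∈ S, m x * Real.exp (lam * f x)
        ≤ ∑ x, m x * Real.exp (lam * f x) :=
      Finset.sum_le_sum_of_subset_of_nonneg (Finset.subset_univ S)
        (fun x _ _ => mul_nonneg (hP.1 x).le (Real.exp_pos _).le)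
    have h3 : (∑ x ∈ S, m x) * Real.exp (lam * (mf + r))
        ≤ Real.exp (lam * mf + lam ^ 2 * Λ ^ 2 / (4 * K)) :=
      le_trans h1 (le_trans h2 hL)
    have h4 : (∑ x ∈ S, m x)
        ≤ Real.exp (lam * mf + lam ^ 2 * Λ ^ 2 / (4 * K)) / Real.exp (lam * (mf + r)) := by
      rw [le_div_iff₀ (Real.exp_pos _)]
      exact h3
    have h5 : Real.exp (lam * mf + lam ^ 2 * Λ ^ 2 / (4 * K)) / Real.exp (lam * (mf + r))
        = Real.exp (-(K * r ^ 2) / Λ ^ 2) := by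
      rw [← Real.exp_sub]
      congr 1
      rw [hlamdef]
      field_simp
      ring
    rw [h5] at h4
    exact h4
  · push_neg at hV
    have hsub : Subsingleton V := ⟨hV⟩
    set x0 := Classical.arbitrary V with hx0
    have hcard : (Finset.univ : Finset V) = {x0} := by
      apply Finset.eq_singleton_iff_unique_mem.2
      exact ⟨Finset.mem_univ _, fun y _ => Subsingleton.elim y _⟩
    have hm1 : m x0 = 1 := by
      have := hP.2.1
      rwa [hcard, Finset.sum_singleton] at this
    have hmean : ∑ z, f z * m z = f x0 := by
      rw [hcard, Finset.sum_singleton, hm1, mul_one]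
    have hempty : Finset.univ.filter (fun x : V => (∑ z, f z * m z) + r ≤ f x) = ∅ := by
      rw [Finset.filter_eq_empty_iff]
      intro x _
      have hx : x = x0 := Subsingleton.elim _ _
      rw [hmean, hx]
      push_neg
      linarith
    rw [hempty]
    simp only [Finset.sum_empty]
    exact (Real.exp_pos _).le

end Chung
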